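/- Let Q be an n×n Stieltjes matrix and π a permutation of [n]. With S_k^π = {π_1, …, π_k}, S_0^π = ∅, and R(π_k; S_{k-1}^π) = (Q ∘ e_{S_k^π} e_{S_k^π}⊤)† − (Q ∘ e_{S_{k-1}^π} e_{S_{k-1}^π}⊤)†, one has Σ_{k=1}^n R(π_k; S_{k-1}^π) = Q⁻¹ (telescoping), and each R(π_k; S_{k-1}^π) is positive semidefinite of rank at most one. -/

import Mathlib

open Matrix
open scoped Classical

/-- The Moore–Penrose pseudoinverse of a real square matrix, defined via its four
characterizing equations (and `0` if no such matrix exists; by uniqueness of the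
Moore–Penrose pseudoinverse, when it exists this definition picks it out). -/
noncomputable def pinv {m : Type*} [Fintype m] [DecidableEq m]
    (A : Matrix m m ℝ) : Matrix m m ℝ :=
  if h : ∃ B : Matrix m m ℝ,
      A * B * A = A ∧ B * A * B = B ∧ (A * B)ᵀ = A * B ∧ (B * A)ᵀ = B * A
  then h.choose else 0

/-- `Q ∘ e_S e_Sᵀ`: the matrix agreeing with `Q` on entries indexed by `S × S`,
and zero elsewhere. -/
def mask {n : ℕ} (Q : Matrix (Fin n) (Fin n) ℝ) (S : Finset (Fin n)) :
    Matrix (Fin n) (Fin n) ℝ :=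
  Matrix.of fun i j => if i ∈ S ∧ j ∈ S then Q i j else 0

/-- `S_k^π = {π_1, …, π_k}`, the image under the permutation `π` of the first `k`
positions (`S_0^π = ∅`). -/
def Sk {n : ℕ} (π : Equiv.Perm (Fin n)) (k : ℕ) : Finset (Fin n) :=
  (Finset.univ.filter fun i : Fin n => (i : ℕ) < k).image π

/-- `R(π_{k+1}; S_k^π)`: the increment of the restricted pseudoinverses along the chain. -/
noncomputable def Rinc {n : ℕ} (Q : Matrix (Fin n) (Fin n) ℝ) (π : Equiv.Perm (Fin n))
    (k : ℕ) : Matrix (Fin n) (Fin n) ℝ :=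
  pinv (mask Q (Sk π (k + 1))) - pinv (mask Q (Sk π k))

namespace Stmt14Aux

variable {n : ℕ}

/-- Diagonal 0/1 projection onto coordinates in `S`. -/
noncomputable def proj (S : Finset (Fin n)) : Matrix (Fin n) (Fin n) ℝ :=
  Matrix.diagonal (fun i => if i ∈ S then 1 else 0)

lemma proj_apply (S : Finset (Fin n)) (i k : Fin n) :
    proj S i k = if i = k then (if i ∈ S then (1:ℝ) else 0) else 0 := by
  simp [proj, Matrix.diagonal_apply]

lemma proj_transpose (S : Finset (Fin n)) : (proj S)ᵀ = proj S :=
  Matrix.diagonal_transpose _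

lemma mul_vecMulVec (A : Matrix (Fin n) (Fin n) ℝ) (x y : Fin n → ℝ) :
    A * vecMulVec x y = vecMulVec (A.mulVec x) y := by
  ext i k
  simp only [Matrix.mul_apply, vecMulVec_apply, Matrix.mulVec, dotProduct,
    Finset.sum_mul, mul_assoc]

lemma vecMulVec_mul (x y : Fin n → ℝ) (A : Matrix (Fin n) (Fin n) ℝ) :
    vecMulVec x y * A = vecMulVec x (A.vecMul y) := by
  ext i k
  simp only [Matrix.mul_apply, vecMulVec_apply, Matrix.vecMul, dotProduct,
    Finset.mul_sum, mul_assoc]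

lemma vecMulVec_mulVec (x y z : Fin n → ℝ) :
    (vecMulVec x y).mulVec z = (y ⬝ᵥ z) • x := by
  ext i
  simp only [Matrix.mulVec, dotProduct, vecMulVec_apply, Pi.smul_apply, smul_eq_mul,
    Finset.sum_mul]
  refine Finset.sum_congr rfl fun l _ => by ring

lemma vecMulVec_transpose' (x y : Fin n → ℝ) :
    (vecMulVec x y)ᵀ = vecMulVec y x := by
  ext i k; simp [vecMulVec_apply, mul_comm]

lemma vecMulVec_sub_left (x y z : Fin n → ℝ) :
    vecMulVec (x - y) z = vecMulVec x z - vecMulVec y z := by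
  ext i k; simp [vecMulVec_apply, sub_mul]

lemma vecMulVec_smul_left (a : ℝ) (x y : Fin n → ℝ) :
    vecMulVec (a • x) y = a • vecMulVec x y := by
  ext i k; simp [vecMulVec_apply, mul_assoc]

lemma vecMulVec_smul_right (a : ℝ) (x y : Fin n → ℝ) :
    vecMulVec x (a • y) = a • vecMulVec x y := by
  ext i k; simp [vecMulVec_apply]; ring

/-- Uniqueness of the Moore–Penrose pseudoinverse. -/
lemma pinv_eq_of {m : Type*} [Fintype m] [DecidableEq m] (A B : Matrix m m ℝ)
    (h1 : A * B * A = A) (h2 : B * A * B = B)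
    (h3 : (A * B)ᵀ = A * B) (h4 : (B * A)ᵀ = B * A) : pinv A = B := by
  have hex : ∃ B' : Matrix m m ℝ,
      A * B' * A = A ∧ B' * A * B' = B' ∧ (A * B')ᵀ = A * B' ∧ (B' * A)ᵀ = B' * A :=
    ⟨B, h1, h2, h3, h4⟩
  rw [pinv, dif_pos hex]
  obtain ⟨g1, g2, g3, g4⟩ := hex.choose_spec
  set C := hex.choose with hC
  have h1t : Aᵀ * Bᵀ * Aᵀ = Aᵀ := by
    rw [mul_assoc, ← Matrix.transpose_mul, ← Matrix.transpose_mul, h1]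
  have hAC : A * C = A * B := by
    calc A * C = (A * C)ᵀ := g3.symm
      _ = Cᵀ * Aᵀ := Matrix.transpose_mul _ _
      _ = Cᵀ * (Aᵀ * Bᵀ * Aᵀ) := by rw [h1t]
      _ = Cᵀ * Aᵀ * (Bᵀ * Aᵀ) := by rw [mul_assoc Aᵀ, ← mul_assoc Cᵀ]
      _ = (A * C)ᵀ * (A * B)ᵀ := by rw [← Matrix.transpose_mul A C, ← Matrix.transpose_mul A B]
      _ = A * C * (A * B) := by rw [g3, h3]
      _ = A * C * A * B := by rw [← mul_assoc]
      _ = A * B := by rw [g1]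
  have hCA : C * A = B * A := by
    calc C * A = (C * A)ᵀ := g4.symm
      _ = Aᵀ * Cᵀ := Matrix.transpose_mul _ _
      _ = Aᵀ * Bᵀ * Aᵀ * Cᵀ := by rw [h1t]
      _ = Aᵀ * Bᵀ * (Aᵀ * Cᵀ) := by rw [mul_assoc]
      _ = (B * A)ᵀ * (C * A)ᵀ := by rw [← Matrix.transpose_mul B A, ← Matrix.transpose_mul C A]
      _ = B * A * (C * A) := by rw [g4, h4]
      _ = B * (A * C * A) := by rw [mul_assoc, ← mul_assoc A C A, ← mul_assoc]
      _ = B * A := by rw [g1]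
  calc C = C * A * C := g2.symm
    _ = B * A * C := by rw [hCA]
    _ = B * (A * C) := by rw [mul_assoc]
    _ = B * (A * B) := by rw [hAC]
    _ = B * A * B := by rw [mul_assoc]
    _ = B := h2

variable {Q : Matrix (Fin n) (Fin n) ℝ}

lemma mask_transpose (hQs : Qᵀ = Q) (S : Finset (Fin n)) : (mask Q S)ᵀ = mask Q S := by
  ext i k
  simp only [Matrix.transpose_apply, mask, Matrix.of_apply, and_comm]
  rcases eq_or_ne i k with rfl | h
  · rfl
  · split_ifs with h'
    · exact congrFun (congrFun hQs i) k
    · rfl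

lemma proj_mul_mask (S : Finset (Fin n)) : proj S * mask Q S = mask Q S := by
  ext i k
  simp only [proj, mask, Matrix.diagonal_mul, Matrix.of_apply]
  split_ifs with h h2 <;> simp_all

lemma proj_mul_of_supp {S : Finset (Fin n)} {B : Matrix (Fin n) (Fin n) ℝ}
    (hsupp : ∀ i j, i ∉ S → B i j = 0) : proj S * B = B := by
  ext i k
  simp only [proj, Matrix.diagonal_mul]
  by_cases h : i ∈ S
  · simp [h]
  · simp [h, hsupp i k h]

/-- `B` behaves as the (embedded) inverse of the principal submatrix of `Q` on `S`. -/
structure Good (Q : Matrix (Fin n) (Fin n) ℝ) (S : Finset (Fin n))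
    (B : Matrix (Fin n) (Fin n) ℝ) : Prop where
  symm : Bᵀ = B
  supp : ∀ i j, i ∉ S → B i j = 0
  inv : B * mask Q S = proj S

lemma Good.colsupp {S : Finset (Fin n)} {B : Matrix (Fin n) (Fin n) ℝ}
    (h : Good Q S B) : ∀ i j, j ∉ S → B i j = 0 := by
  intro i j hj
  have := h.supp j i hj
  rw [← h.symm]
  exact this

lemma Good.maskmul {S : Finset (Fin n)} {B : Matrix (Fin n) (Fin n) ℝ}
    (hQs : Qᵀ = Q) (h : Good Q S B) : mask Q S * B = proj S := by
  have : mask Q S * B = (B * mask Q S)ᵀ := by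
    rw [Matrix.transpose_mul, mask_transpose hQs, h.symm]
  rw [this, h.inv, proj_transpose]

lemma Good.pinv_eq {S : Finset (Fin n)} {B : Matrix (Fin n) (Fin n) ℝ}
    (hQs : Qᵀ = Q) (h : Good Q S B) : pinv (mask Q S) = B := by
  refine pinv_eq_of _ _ ?_ ?_ ?_ ?_
  · rw [h.maskmul hQs, proj_mul_mask]
  · rw [h.inv, proj_mul_of_supp h.supp]
  · rw [h.maskmul hQs, proj_transpose]
  · rw [h.inv, proj_transpose]


lemma vecMulVec_zero_left (y : Fin n → ℝ) : vecMulVec (0 : Fin n → ℝ) y = 0 := by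
  ext i k; simp [vecMulVec_apply]

lemma good_empty : Good Q (∅ : Finset (Fin n)) 0 := by
  refine ⟨by simp, fun i j _ => rfl, ?_⟩
  ext i k
  simp [proj_apply]

lemma mask_insert (hQs : Qᵀ = Q) {S : Finset (Fin n)} {j : Fin n} (hj : j ∉ S) :
    mask Q (insert j S) = mask Q S
      + vecMulVec (fun i => if i ∈ insert j S then Q i j else 0) (fun i => if i = j then 1 else 0)
      + vecMulVec (fun i => if i = j then 1 else 0) (fun i => if i ∈ insert j S then Q i j else 0)
      - Q j j • vecMulVec (fun i => if i = j then 1 else 0) (fun i => if i = j then 1 else 0) := by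
  have hsym : ∀ a b, Q a b = Q b a := by
    intro a b
    rw [← Matrix.transpose_apply Q b a, hQs]
  ext i k
  simp only [mask, Matrix.of_apply, Matrix.add_apply, Matrix.sub_apply, Matrix.smul_apply,
    vecMulVec_apply, smul_eq_mul, Finset.mem_insert]
  by_cases hi : i = j <;> by_cases hk : k = j <;>
    by_cases hiS : i ∈ S <;> by_cases hkS : k ∈ S <;>
    simp_all

lemma proj_insert {S : Finset (Fin n)} {j : Fin n} (hj : j ∉ S) :
    proj (insert j S) = proj S
      + vecMulVec (fun i => if i = j then (1:ℝ) else 0) (fun i => if i = j then 1 else 0) := by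
  ext i k
  simp only [proj_apply, Matrix.add_apply, vecMulVec_apply, Finset.mem_insert]
  by_cases hik : i = k <;> by_cases hij : i = j <;> by_cases hkj : k = j <;> simp_all

lemma step (hQ : Q.PosDef) (hQs : Qᵀ = Q) {S : Finset (Fin n)} {j : Fin n} (hj : j ∉ S)
    {B : Matrix (Fin n) (Fin n) ℝ} (hB : Good Q S B) :
    ∃ w : Fin n → ℝ, Good Q (insert j S) (B + vecMulVec w w) := by
  set e : Fin n → ℝ := fun i => if i = j then 1 else 0 with he
  set c : Fin n → ℝ := fun i => if i ∈ insert j S then Q i j else 0 with hc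
  set u : Fin n → ℝ := B.mulVec c with hu
  set s : ℝ := Q j j - u ⬝ᵥ c with hs
  set v : Fin n → ℝ := e - u with hv
  have hM : mask Q (insert j S) = mask Q S + vecMulVec c e + vecMulVec e c
      - Q j j • vecMulVec e e := mask_insert hQs hj
  have hus : ∀ i, i ∉ S → u i = 0 := by
    intro i hi
    simp only [hu, Matrix.mulVec, dotProduct]
    exact Finset.sum_eq_zero fun l _ => by rw [hB.supp i l hi, zero_mul]
  have h_uj : u j = 0 := hus j hj
  have h_vj : v j = 1 := by simp [hv, he, h_uj]
  have h_vsupp : ∀ i, i ∉ insert j S → v i = 0 := by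
    intro i hi
    have hi1 : i ≠ j := fun h => hi (h ▸ Finset.mem_insert_self j S)
    have hi2 : i ∉ S := fun h => hi (Finset.mem_insert_of_mem h)
    simp [hv, he, hi1, hus i hi2]
  have h_Be : B.mulVec e = 0 := by
    ext i
    simp only [Matrix.mulVec, dotProduct, he, mul_ite, mul_one, mul_zero, Pi.zero_apply]
    rw [Finset.sum_ite_eq' Finset.univ j (fun l => B i l)]
    simp [hB.colsupp i j hj]
  have hBM : B * mask Q (insert j S) = proj S + vecMulVec u e := by
    rw [hM, mul_sub, mul_add, mul_add, hB.inv, mul_vecMulVec, mul_vecMulVec, h_Be,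
      mul_smul_comm, mul_vecMulVec, h_Be, vecMulVec_zero_left, ← hu]
    simp [vecMulVec_zero_left]
  have hMB : mask Q (insert j S) * B = proj S + vecMulVec e u := by
    calc mask Q (insert j S) * B = (B * mask Q (insert j S))ᵀ := by
          rw [Matrix.transpose_mul, mask_transpose hQs, hB.symm]
      _ = (proj S + vecMulVec u e)ᵀ := by rw [hBM]
      _ = proj S + vecMulVec e u := by
          rw [Matrix.transpose_add, proj_transpose, vecMulVec_transpose']
  have hMe : (mask Q (insert j S)).mulVec e = c := by
    ext i
    simp only [Matrix.mulVec, dotProduct, he, mul_ite, mul_one, mul_zero]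
    rw [Finset.sum_ite_eq' Finset.univ j (fun l => mask Q (insert j S) i l)]
    simp [mask, hc, Finset.mem_insert]
  have hprojc : c - (proj S).mulVec c = Q j j • e := by
    ext i
    rw [Pi.sub_apply, Pi.smul_apply]
    rw [show (proj S).mulVec c i = (if i ∈ S then (1:ℝ) else 0) * c i from
      Matrix.mulVec_diagonal _ _ _]
    by_cases hiS : i ∈ S
    · have hij : i ≠ j := fun h => hj (h ▸ hiS)
      simp [hiS, he, hij]
    · by_cases hij : i = j
      · subst hij
        simp [hiS, hc, he]
      · simp [hiS, hij, hc, he, Finset.mem_insert]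
  have hMv : (mask Q (insert j S)).mulVec v = s • e := by
    have h1 : (mask Q (insert j S)).mulVec u =
        (proj S).mulVec c + (u ⬝ᵥ c) • e := by
      rw [hu, Matrix.mulVec_mulVec, hMB, Matrix.add_mulVec, vecMulVec_mulVec]
    rw [hv, Matrix.mulVec_sub, hMe, h1, hs, sub_smul]
    rw [← hprojc]
    abel
  have h_ve : v ⬝ᵥ e = 1 := by
    simp only [dotProduct, he, mul_ite, mul_one, mul_zero]
    rw [Finset.sum_ite_eq' Finset.univ j (fun l => v l)]
    simp [h_vj]
  have h_s : s = v ⬝ᵥ (mask Q (insert j S)).mulVec v := by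
    rw [hMv, dotProduct_smul, h_ve]
    simp
  have h_spos : 0 < s := by
    rw [h_s]
    have hveq : v ⬝ᵥ (mask Q (insert j S)).mulVec v = v ⬝ᵥ Q.mulVec v := by
      simp only [dotProduct, Matrix.mulVec]
      refine Finset.sum_congr rfl fun i _ => ?_
      by_cases hi : i ∈ insert j S
      · congr 1
        refine Finset.sum_congr rfl fun k _ => ?_
        by_cases hk : k ∈ insert j S
        · simp only [mask, Matrix.of_apply]
          rw [if_pos (And.intro hi hk)]
        · rw [h_vsupp k hk, mul_zero, mul_zero]
      · rw [h_vsupp i hi, zero_mul, zero_mul]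
    rw [hveq]
    have hvne : v ≠ 0 := fun h => by
      rw [h] at h_vj
      exact one_ne_zero h_vj.symm
    simpa using hQ.dotProduct_mulVec_pos hvne
  refine ⟨(Real.sqrt s)⁻¹ • v, ?_, ?_, ?_⟩
  · rw [Matrix.transpose_add, hB.symm, vecMulVec_transpose']
  · intro i k hi
    have hiS : i ∉ S := fun h => hi (Finset.mem_insert_of_mem h)
    simp [Matrix.add_apply, hB.supp i k hiS, vecMulVec_apply, h_vsupp i hi]
  · have hww : vecMulVec ((Real.sqrt s)⁻¹ • v) ((Real.sqrt s)⁻¹ • v) * mask Q (insert j S) =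
        vecMulVec v e := by
      rw [vecMulVec_mul]
      have hvm : (mask Q (insert j S)).vecMul ((Real.sqrt s)⁻¹ • v) =
          ((Real.sqrt s)⁻¹ * s) • e := by
        rw [← Matrix.mulVec_transpose, mask_transpose hQs, Matrix.mulVec_smul, hMv, smul_smul]
      rw [hvm, vecMulVec_smul_right, vecMulVec_smul_left, smul_smul]
      have hss : ((Real.sqrt s)⁻¹ * s) * (Real.sqrt s)⁻¹ = 1 := by
        rw [mul_comm (Real.sqrt s)⁻¹ s, mul_assoc, ← mul_inv, Real.mul_self_sqrt h_spos.le,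
          mul_inv_cancel₀ (ne_of_gt h_spos)]
      rw [hss, one_smul]
    rw [add_mul, hBM, hww, hv, vecMulVec_sub_left, proj_insert hj, ← he]
    abel

end Stmt14Aux

open Stmt14Aux

/-- for a Stieltjes matrix `Q` and a permutation `π`, the increments
`R(π_k; S_{k-1}^π)` telescope to `Q⁻¹`, and each is positive semidefinite of rank at most
one. -/
theorem stmt14 {n : ℕ} (Q : Matrix (Fin n) (Fin n) ℝ)
    (hQ : Q.PosDef) (hoff : ∀ i j : Fin n, i ≠ j → Q i j ≤ 0)
    (π : Equiv.Perm (Fin n)) :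
    (∑ k : Fin n, Rinc Q π k) = Q⁻¹ ∧
      ∀ k : Fin n, (Rinc Q π k).PosSemidef ∧ (Rinc Q π k).rank ≤ 1 := by
  have hQs : Qᵀ = Q := by
    ext i k
    rw [Matrix.transpose_apply]
    conv_lhs => rw [← hQ.1.eq]
    simp [Matrix.conjTranspose_apply]
  have hSk0 : Sk π 0 = ∅ := by
    have hf : (Finset.univ.filter fun i : Fin n => (i : ℕ) < 0) = ∅ :=
      Finset.filter_false_of_mem (fun i _ => Nat.not_lt_zero _)
    rw [Sk, hf, Finset.image_empty]
  have hSkn : Sk π n = Finset.univ := by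
    ext x
    simp only [Sk, Finset.mem_image, Finset.mem_filter, Finset.mem_univ, true_and, iff_true]
    exact ⟨π.symm x, (π.symm x).isLt, π.apply_symm_apply x⟩
  have hins : ∀ k : Fin n, Sk π ((k : ℕ) + 1) = insert (π k) (Sk π k) := by
    intro k
    ext x
    simp only [Sk, Finset.mem_image, Finset.mem_insert, Finset.mem_filter, Finset.mem_univ,
      true_and]
    constructor
    · rintro ⟨i, hi, rfl⟩
      rcases Nat.lt_succ_iff_lt_or_eq.mp hi with h | h
      · exact Or.inr ⟨i, h, rfl⟩
      · exact Or.inl (by rw [Fin.ext h])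
    · rintro (rfl | ⟨i, hi, rfl⟩)
      · exact ⟨k, Nat.lt_succ_self _, rfl⟩
      · exact ⟨i, Nat.lt_succ_of_lt hi, rfl⟩
  have hnotmem : ∀ k : Fin n, π k ∉ Sk π (k : ℕ) := by
    intro k hk
    simp only [Sk, Finset.mem_image, Finset.mem_filter, Finset.mem_univ, true_and] at hk
    obtain ⟨i, hi, hik⟩ := hk
    have hik' : i = k := π.injective hik
    rw [hik'] at hi
    exact lt_irrefl _ hi
  have main : ∀ k : ℕ, k ≤ n → ∃ B, Good Q (Sk π k) B ∧ pinv (mask Q (Sk π k)) = B := by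
    intro k
    induction k with
    | zero =>
      intro _
      refine ⟨0, ?_, ?_⟩
      · rw [hSk0]; exact good_empty
      · rw [hSk0]; exact Good.pinv_eq hQs good_empty
    | succ k ih =>
      intro hk1
      obtain ⟨B, hB, hpB⟩ := ih (Nat.le_of_succ_le hk1)
      have hkn : k < n := Nat.lt_of_succ_le hk1
      obtain ⟨w, hw⟩ := step hQ hQs (hnotmem ⟨k, hkn⟩) hB
      have hins' : Sk π (k + 1) = insert (π ⟨k, hkn⟩) (Sk π k) := hins ⟨k, hkn⟩
      refine ⟨B + vecMulVec w w, ?_, ?_⟩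
      · rw [hins']; exact hw
      · rw [hins']; exact Good.pinv_eq hQs hw
  have hRinc : ∀ k : Fin n, ∃ w : Fin n → ℝ, Rinc Q π k = vecMulVec w w := by
    intro k
    obtain ⟨B, hB, hpB⟩ := main k (le_of_lt k.isLt)
    obtain ⟨w, hw⟩ := step hQ hQs (hnotmem k) hB
    refine ⟨w, ?_⟩
    rw [Rinc, hpB, hins k, Good.pinv_eq hQs hw]
    exact add_sub_cancel_left B _
  have hPSD : ∀ w : Fin n → ℝ, (vecMulVec w w).PosSemidef := by
    intro w
    refine Matrix.posSemidef_iff_dotProduct_mulVec.mpr ⟨?_, ?_⟩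
    · ext i k
      simp [Matrix.conjTranspose_apply, vecMulVec_apply, mul_comm]
    · intro x
      rw [vecMulVec_mulVec, dotProduct_smul]
      have hst : (star x : Fin n → ℝ) = x := by
        ext i; simp
      rw [hst, smul_eq_mul, dotProduct_comm x w]
      exact mul_self_nonneg _
  have hrank : ∀ w : Fin n → ℝ, (vecMulVec w w).rank ≤ 1 := by
    intro w
    rw [Matrix.vecMulVec_eq (Fin 1)]
    calc (Matrix.replicateCol (Fin 1) w * Matrix.replicateRow (Fin 1) w).rank
        ≤ (Matrix.replicateCol (Fin 1) w).rank := Matrix.rank_mul_le_left _ _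
      _ ≤ Fintype.card (Fin 1) := Matrix.rank_le_card_width _
      _ = 1 := Fintype.card_fin 1
  constructor
  · rw [Fin.sum_univ_eq_sum_range (fun k => Rinc Q π k) n]
    have htel : ∑ k ∈ Finset.range n, Rinc Q π k =
        pinv (mask Q (Sk π n)) - pinv (mask Q (Sk π 0)) := by
      rw [← Finset.sum_range_sub (fun k => pinv (mask Q (Sk π k))) n]
      exact Finset.sum_congr rfl fun k _ => rfl
    rw [htel, hSkn, hSk0]
    have h0 : mask Q (∅ : Finset (Fin n)) = 0 := by
      ext i k; simp [mask]
    have hmu : mask Q (Finset.univ : Finset (Fin n)) = Q := by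
      ext i k; simp [mask]
    have hp0 : pinv (0 : Matrix (Fin n) (Fin n) ℝ) = 0 :=
      pinv_eq_of 0 0 (by simp) (by simp) (by simp) (by simp)
    have hdet : IsUnit Q.det := hQ.det_pos.ne'.isUnit
    have hpQ : pinv Q = Q⁻¹ := by
      refine pinv_eq_of Q Q⁻¹ ?_ ?_ ?_ ?_
      · rw [Matrix.mul_nonsing_inv _ hdet, one_mul]
      · rw [Matrix.nonsing_inv_mul _ hdet, one_mul]
      · rw [Matrix.mul_nonsing_inv _ hdet]; exact Matrix.transpose_one
      · rw [Matrix.nonsing_inv_mul _ hdet]; exact Matrix.transpose_one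
    rw [h0, hmu, hp0, hpQ, sub_zero]
  · intro k
    obtain ⟨w, hw⟩ := hRinc k
    rw [hw]
    exact ⟨hPSD w, hrank w⟩
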